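/- If the inclusion ideal graph In(S) of a semigroup S is connected, then its diameter is at most 3. -/

import Mathlib

open Set

variable {S : Type*}

/-- A left ideal of a semigroup: a nonempty subset `I` with `S * I ⊆ I`. -/
def IsLeftIdeal [Semigroup S] (I : Set S) : Prop :=
  I.Nonempty ∧ ∀ s : S, ∀ x ∈ I, s * x ∈ I

/-- A nontrivial left ideal is a left ideal different from `S`. -/
def IsNontrivialLeftIdeal [Semigroup S] (I : Set S) : Prop :=
  IsLeftIdeal I ∧ I ≠ Set.univ

/-- A minimal left ideal: a nontrivial left ideal properly containing no left ideal. -/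
def IsMinimalLeftIdeal [Semigroup S] (I : Set S) : Prop :=
  IsNontrivialLeftIdeal I ∧ ∀ J : Set S, IsLeftIdeal J → J ⊆ I → J = I

/-- A maximal left ideal: a nontrivial left ideal properly contained in no
nontrivial left ideal. -/
def IsMaximalLeftIdeal [Semigroup S] (I : Set S) : Prop :=
  IsNontrivialLeftIdeal I ∧ ∀ J : Set S, IsNontrivialLeftIdeal J → I ⊆ J → J = I

/-- Vertices of the inclusion ideal graph: the nontrivial left ideals of `S`. -/
def IdealVert (S : Type*) [Semigroup S] := {I : Set S // IsNontrivialLeftIdeal I}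

/-- The inclusion ideal graph of a semigroup: distinct nontrivial left ideals are
adjacent iff one properly contains the other. -/
def inclusionIdealGraph (S : Type*) [Semigroup S] : SimpleGraph (IdealVert S) :=
  SimpleGraph.fromRel (fun I J => I.1 ⊂ J.1)


section Aux
variable [Semigroup S]

lemma isLeftIdeal_union {I J : Set S} (hI : IsLeftIdeal I) (hJ : IsLeftIdeal J) :
    IsLeftIdeal (I ∪ J) := by
  refine ⟨hI.1.mono subset_union_left, ?_⟩
  rintro s x (hx | hx)
  · exact Or.inl (hI.2 s x hx)
  · exact Or.inr (hJ.2 s x hx)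

lemma isLeftIdeal_inter {I J : Set S} (hI : IsLeftIdeal I) (hJ : IsLeftIdeal J)
    (hne : (I ∩ J).Nonempty) : IsLeftIdeal (I ∩ J) := by
  exact ⟨hne, fun s x hx => ⟨hI.2 s x hx.1, hJ.2 s x hx.2⟩⟩

lemma adj_of_ssubset {I J : IdealVert S} (hIJ : I.1 ⊂ J.1 ∨ J.1 ⊂ I.1) :
    (inclusionIdealGraph S).Adj I J := by
  have hne : I ≠ J := by
    rintro rfl
    rcases hIJ with hIJ | hIJ <;> exact hIJ.ne rfl
  exact (SimpleGraph.fromRel_adj _ I J).mpr ⟨hne, hIJ⟩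

lemma dist_le_two {u v w : IdealVert S} (h1 : (inclusionIdealGraph S).Adj u w)
    (h2 : (inclusionIdealGraph S).Adj w v) : (inclusionIdealGraph S).dist u v ≤ 3 := by
  have := SimpleGraph.dist_le (SimpleGraph.Walk.cons h1 (SimpleGraph.Walk.cons h2 SimpleGraph.Walk.nil))
  simpa using this.trans (by norm_num)

lemma dist_le_three {u v w x : IdealVert S} (h1 : (inclusionIdealGraph S).Adj u w)
    (h2 : (inclusionIdealGraph S).Adj w x) (h3 : (inclusionIdealGraph S).Adj x v) :
    (inclusionIdealGraph S).dist u v ≤ 3 := by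
  have := SimpleGraph.dist_le (SimpleGraph.Walk.cons h1 (SimpleGraph.Walk.cons h2
    (SimpleGraph.Walk.cons h3 SimpleGraph.Walk.nil)))
  simpa using this

end Aux

/-- If `In(S)` is connected then its diameter is at most `3`. -/
theorem stmt7 [Semigroup S] (h : (inclusionIdealGraph S).Connected) :
    ∀ u v : IdealVert S, (inclusionIdealGraph S).dist u v ≤ 3 := by

  intro u v
  by_cases huv : u = v
  · subst huv; simp [SimpleGraph.dist_self]
  obtain ⟨I, hIid, hIuniv⟩ := u
  obtain ⟨J, hJid, hJuniv⟩ := v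
  have hIJ : I ≠ J := fun hh => huv (Subtype.ext hh)
  by_cases hsub : I ⊆ J ∨ J ⊆ I
  · -- adjacent
    have hadj : (inclusionIdealGraph S).Adj ⟨I, hIid, hIuniv⟩ ⟨J, hJid, hJuniv⟩ := by
      apply adj_of_ssubset
      rcases hsub with hs | hs
      · exact Or.inl ⟨hs, fun hs' => hIJ (subset_antisymm hs hs')⟩
      · exact Or.inr ⟨hs, fun hs' => hIJ (subset_antisymm hs' hs)⟩
    calc (inclusionIdealGraph S).dist _ _ ≤ 1 := SimpleGraph.dist_le
          (SimpleGraph.Walk.cons hadj SimpleGraph.Walk.nil)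
      _ ≤ 3 := by norm_num
  push_neg at hsub
  obtain ⟨hnIJ, hnJI⟩ := hsub
  by_cases hinter : (I ∩ J).Nonempty
  · -- go through I ∩ J
    have hKid : IsLeftIdeal (I ∩ J) := isLeftIdeal_inter hIid hJid hinter
    have hKuniv : I ∩ J ≠ univ := fun hh => hIuniv (univ_subset_iff.mp (hh ▸ inter_subset_left))
    refine dist_le_two (w := ⟨I ∩ J, hKid, hKuniv⟩) (adj_of_ssubset ?_) (adj_of_ssubset ?_)
    · exact Or.inr ⟨inter_subset_left, fun hs => hnIJ (fun x hx => (hs hx).2)⟩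
    · exact Or.inl ⟨inter_subset_right, fun hs => hnJI (fun x hx => (hs hx).1)⟩
  have hdisj : ∀ x, x ∈ I → x ∈ J → False := by
    intro x hxI hxJ; exact hinter ⟨x, hxI, hxJ⟩
  by_cases hun : I ∪ J = univ
  · -- hard case: I, J partition S; use connectedness
    obtain ⟨p⟩ := h.preconnected ⟨I, hIid, hIuniv⟩ ⟨J, hJid, hJuniv⟩
    cases p with
    | nil => exact absurd rfl huv
    | @cons _ w _ ha p' =>
      -- w is a neighbor of I
      replace ha := (SimpleGraph.fromRel_adj (fun I J : IdealVert S => I.1 ⊂ J.1) _ _).mp ha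
      obtain ⟨K, hKid, hKuniv⟩ := w
      obtain ⟨hwne, hIK | hKI⟩ := ha
      · -- I ⊂ K
        have hx : ∃ x, x ∈ K ∧ x ∈ J := by
          obtain ⟨x, hxK, hxI⟩ := exists_of_ssubset hIK
          refine ⟨x, hxK, ?_⟩
          rcases (hun ▸ (mem_univ x) : x ∈ I ∪ J) with hx | hx
          · exact absurd hx hxI
          · exact hx
        obtain ⟨x0, hx0K, hx0J⟩ := hx
        by_cases hJK : J ⊆ K
        · -- path I - K - J
          have hJssK : J ⊂ K := by
            refine ⟨hJK, fun hs => ?_⟩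
            obtain ⟨a, haI⟩ := hIid.1
            exact hdisj a haI (hs (hIK.1 haI))
          exact dist_le_two (w := ⟨K, hKid, hKuniv⟩)
            (adj_of_ssubset (Or.inl hIK)) (adj_of_ssubset (Or.inr hJssK))
        · -- path I - (I ∪ (K∩J)) - (K∩J) - J
          have hJ'ne : (K ∩ J).Nonempty := ⟨x0, hx0K, hx0J⟩
          have hJ'id : IsLeftIdeal (K ∩ J) := isLeftIdeal_inter hKid hJid hJ'ne
          have hJ'univ : K ∩ J ≠ univ := fun hh =>
            hJuniv (univ_subset_iff.mp (hh ▸ inter_subset_right))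
          have hAid : IsLeftIdeal (I ∪ (K ∩ J)) := isLeftIdeal_union hIid hJ'id
          have hAuniv : I ∪ (K ∩ J) ≠ univ := by
            intro hh
            apply hJK
            intro y hyJ
            rcases (hh ▸ (mem_univ y) : y ∈ I ∪ (K ∩ J)) with hy | hy
            · exact absurd (hdisj y hy hyJ) (fun f => f)
            · exact hy.1
          obtain ⟨a, haI⟩ := hIid.1
          refine dist_le_three (w := ⟨I ∪ (K ∩ J), hAid, hAuniv⟩)
            (x := ⟨K ∩ J, hJ'id, hJ'univ⟩)
            (adj_of_ssubset (Or.inl ?_)) (adj_of_ssubset (Or.inr ?_)) (adj_of_ssubset (Or.inl ?_))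
          · exact ⟨subset_union_left, fun hs =>
              hdisj x0 ((hs (Or.inr ⟨hx0K, hx0J⟩))) hx0J⟩
          · exact ⟨subset_union_right, fun hs => hdisj a haI (hs (Or.inl haI)).2⟩
          · exact ⟨inter_subset_right, fun hs => hJK (fun y hy => (hs hy).1)⟩
      · -- K ⊂ I : path I - K - (K ∪ J) - J
        have hKJid : IsLeftIdeal (K ∪ J) := isLeftIdeal_union hKid hJid
        have hKJuniv : K ∪ J ≠ univ := by
          intro hh
          apply hKI.2
          intro x hxI
          rcases (hh ▸ (mem_univ x) : x ∈ K ∪ J) with hx | hx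
          · exact hx
          · exact absurd (hdisj x hxI hx) (fun f => f)
        obtain ⟨b, hb⟩ := hJid.1
        obtain ⟨a, ha'⟩ := hKid.1
        refine dist_le_three (w := ⟨K, hKid, hKuniv⟩) (x := ⟨K ∪ J, hKJid, hKJuniv⟩)
          (adj_of_ssubset (Or.inr hKI)) (adj_of_ssubset (Or.inl ?_)) (adj_of_ssubset (Or.inr ?_))
        · exact ⟨subset_union_left, fun hs => hdisj b (hKI.1 (hs (Or.inr hb))) hb⟩
        · exact ⟨subset_union_right, fun hs => hdisj a (hKI.1 ha') (hs (Or.inl ha'))⟩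
  · -- go through I ∪ J
    have hKid : IsLeftIdeal (I ∪ J) := isLeftIdeal_union hIid hJid
    obtain ⟨a, haI⟩ := hIid.1
    obtain ⟨b, hbJ⟩ := hJid.1
    refine dist_le_two (w := ⟨I ∪ J, hKid, hun⟩) (adj_of_ssubset (Or.inl ?_))
      (adj_of_ssubset (Or.inr ?_))
    · exact ⟨subset_union_left, fun hs => hdisj b (hs (Or.inr hbJ)) hbJ⟩
    · exact ⟨subset_union_right, fun hs => hdisj a haI (hs (Or.inl haI))⟩
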